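/- For the Miyamoto–Nagai disk, the maximal allowed constant b ensuring nonnegativity of the azimuthal second moment is b_M = 6/5: i.e., the infimum over z ∈ ℝ of b_M(z) = 6/5 + (14s + 4√(s(6s+15ζ)))/(25ζ), where ζ = √(1+z²), equals 6/5 for every s ≥ 0, and is attained only in the limit |z| → ∞ (for s > 0). -/

import Mathlib

open Filter

/-- `b_M(z)` for the Miyamoto–Nagai disk. -/
noncomputable def bM_MN (s z : ℝ) : ℝ :=
  6 / 5 + (14 * s + 4 * Real.sqrt (s * (6 * s + 15 * Real.sqrt (1 + z ^ 2))))
    / (25 * Real.sqrt (1 + z ^ 2))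

lemma zeta_pos (z : ℝ) : 0 < Real.sqrt (1 + z ^ 2) :=
  Real.sqrt_pos.mpr (by positivity)

lemma one_le_zeta (z : ℝ) : 1 ≤ Real.sqrt (1 + z ^ 2) := by
  have : Real.sqrt 1 ≤ Real.sqrt (1 + z ^ 2) :=
    Real.sqrt_le_sqrt (by nlinarith [sq_nonneg z])
  simpa using this

lemma bM_lower (s : ℝ) (hs : 0 ≤ s) (z : ℝ) : 6 / 5 ≤ bM_MN s z := by
  unfold bM_MN
  have h1 : (0:ℝ) ≤ (14 * s + 4 * Real.sqrt (s * (6 * s + 15 * Real.sqrt (1 + z ^ 2))))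
      / (25 * Real.sqrt (1 + z ^ 2)) := by
    have := zeta_pos z
    positivity
  linarith

lemma bM_strict (s : ℝ) (hs : 0 < s) (z : ℝ) : 6 / 5 < bM_MN s z := by
  unfold bM_MN
  have h1 : (0:ℝ) < (14 * s + 4 * Real.sqrt (s * (6 * s + 15 * Real.sqrt (1 + z ^ 2))))
      / (25 * Real.sqrt (1 + z ^ 2)) := by
    apply div_pos
    · have := Real.sqrt_nonneg (s * (6 * s + 15 * Real.sqrt (1 + z ^ 2)))
      nlinarith
    · have := zeta_pos z
      linarith
  linarith

lemma bM_upper (s : ℝ) (hs : 0 ≤ s) (z : ℝ) (hz : 1 ≤ z) :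
    bM_MN s z ≤ 6 / 5 +
      (14 * s + 4 * Real.sqrt (s * (6 * s + 15))) / (25 * Real.sqrt z) := by
  unfold bM_MN
  set ζ := Real.sqrt (1 + z ^ 2) with hζdef
  have hζ1 : 1 ≤ ζ := one_le_zeta z
  have hζ0 : 0 < ζ := zeta_pos z
  have hz0 : (0:ℝ) < z := lt_of_lt_of_le one_pos hz
  have hzζ : z ≤ ζ := by
    rw [hζdef]
    nlinarith [Real.sq_sqrt (show (0:ℝ) ≤ 1 + z ^ 2 by positivity),
      Real.sqrt_nonneg (1 + z ^ 2), sq_nonneg (Real.sqrt (1 + z^2) - z)]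
  have hsz : Real.sqrt z ≤ Real.sqrt ζ := Real.sqrt_le_sqrt hzζ
  have hsz0 : 0 < Real.sqrt z := Real.sqrt_pos.mpr hz0
  have hsqζ1 : 1 ≤ Real.sqrt ζ := by
    have : Real.sqrt 1 ≤ Real.sqrt ζ := Real.sqrt_le_sqrt hζ1
    simpa using this
  set N := 14 * s + 4 * Real.sqrt (s * (6 * s + 15)) with hN
  have hN0 : 0 ≤ N := by positivity
  have h1 : Real.sqrt (s * (6 * s + 15 * ζ)) ≤ Real.sqrt (s * (6 * s + 15)) * Real.sqrt ζ := by
    rw [← Real.sqrt_mul (by positivity)]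
    apply Real.sqrt_le_sqrt
    nlinarith [mul_nonneg (sq_nonneg s) (sub_nonneg.mpr hζ1)]
  have hnum : 14 * s + 4 * Real.sqrt (s * (6 * s + 15 * ζ)) ≤ N * Real.sqrt ζ := by
    rw [hN]
    nlinarith [Real.sqrt_nonneg (s * (6 * s + 15)), Real.sqrt_nonneg (s * (6 * s + 15 * ζ))]
  have key : (14 * s + 4 * Real.sqrt (s * (6 * s + 15 * ζ))) / (25 * ζ)
      ≤ N / (25 * Real.sqrt z) := by
    calc (14 * s + 4 * Real.sqrt (s * (6 * s + 15 * ζ))) / (25 * ζ)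
        ≤ (N * Real.sqrt ζ) / (25 * ζ) := by
          apply div_le_div_of_nonneg_right hnum (by linarith) |>.trans_eq rfl
      _ = N / (25 * Real.sqrt ζ) := by
          rw [show ζ = Real.sqrt ζ * Real.sqrt ζ from (Real.mul_self_sqrt hζ0.le).symm]
          have h : Real.sqrt ζ ≠ 0 := by positivity
          have h2 : Real.sqrt ζ * Real.sqrt ζ = ζ := Real.mul_self_sqrt hζ0.le
          field_simp
          have h3 : Real.sqrt (Real.sqrt ζ ^ 2) = Real.sqrt ζ := Real.sqrt_sq (Real.sqrt_nonneg ζ)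
          rw [h3] <;> nlinarith [h2]
      _ ≤ N / (25 * Real.sqrt z) := by
          apply div_le_div_of_nonneg_left hN0 (by linarith) (by linarith)
  linarith

lemma bM_tendsto_atTop (s : ℝ) (hs : 0 ≤ s) :
    Tendsto (fun z => bM_MN s z) atTop (nhds (6 / 5)) := by
  set N := 14 * s + 4 * Real.sqrt (s * (6 * s + 15)) with hN
  have hup : Tendsto (fun z : ℝ => 6 / 5 + N / (25 * Real.sqrt z)) atTop (nhds (6 / 5)) := by
    have hsq : Tendsto Real.sqrt atTop atTop := by
      apply tendsto_atTop_atTop_of_monotone (fun a b hab => Real.sqrt_le_sqrt hab)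
      intro b
      exact ⟨(max 0 b) ^ 2, by
        rw [Real.sqrt_sq (le_max_left 0 b)]; exact le_max_right 0 b⟩
    have h1 : Tendsto (fun z : ℝ => 25 * Real.sqrt z) atTop atTop :=
      hsq.const_mul_atTop (by norm_num)
    have h2 : Tendsto (fun z : ℝ => N / (25 * Real.sqrt z)) atTop (nhds 0) := by
      simpa [div_eq_mul_inv] using (h1.inv_tendsto_atTop.const_mul N)
    have h3 := (tendsto_const_nhds (x := (6/5 : ℝ)) (f := atTop)).add h2
    simpa using h3
  apply tendsto_of_tendsto_of_tendsto_of_le_of_le' tendsto_const_nhds hup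
  · exact Eventually.of_forall fun z => bM_lower s hs z
  · filter_upwards [eventually_ge_atTop (1:ℝ)] with z hz
    exact bM_upper s hs z hz

theorem stmt3 (s : ℝ) (hs : 0 ≤ s) :
    (⨅ z : ℝ, bM_MN s z) = 6 / 5 ∧
    (0 < s → ∀ z : ℝ, 6 / 5 < bM_MN s z) ∧
    Tendsto (fun z => bM_MN s z) atTop (nhds (6 / 5)) ∧
    Tendsto (fun z => bM_MN s z) atBot (nhds (6 / 5)) := by
  have htop := bM_tendsto_atTop s hs
  have heven : ∀ z : ℝ, bM_MN s (-z) = bM_MN s z := by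
    intro z; simp [bM_MN]
  have hbot : Tendsto (fun z => bM_MN s z) atBot (nhds (6 / 5)) := by
    have := htop.comp tendsto_neg_atBot_atTop
    have heq : (fun z : ℝ => bM_MN s z) = ((fun z => bM_MN s z) ∘ Neg.neg) := by
      funext z; simp [Function.comp, heven]
    rw [heq]; exact this
  have hbdd : BddBelow (Set.range fun z => bM_MN s z) := by
    refine ⟨6 / 5, ?_⟩
    rintro _ ⟨z, rfl⟩
    exact bM_lower s hs z
  refine ⟨le_antisymm ?_ (le_ciInf (bM_lower s hs)), fun hps z => bM_strict s hps z, htop, hbot⟩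
  exact ge_of_tendsto htop (Eventually.of_forall fun z => ciInf_le hbdd z)
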